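/- Let f(x) ∈ A = F_2[X_1,...,X_m]/(X_1^2-1,...,X_m^2-1), represented by its squarefree polynomial representative f(X). Then f(x) ∈ M^l if and only if the remainder of f(X) on division by the Groebner basis G = {∏_{i∈I}(X_i-1) : |I| = l} is zero. -/

import Mathlib

set_option synthInstance.maxHeartbeats 1000000
set_option maxHeartbeats 1000000

open MvPolynomial

noncomputable def gI (m : ℕ) (I : Finset (Fin m)) : MvPolynomial (Fin m) (ZMod 2) :=
  ∏ i ∈ I, (X i - 1)

noncomputable def XI (m : ℕ) (I : Finset (Fin m)) : MvPolynomial (Fin m) (ZMod 2) :=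
  ∏ i ∈ I, X i

/-- The ideal (X₁²-1, …, Xₘ²-1). -/
noncomputable def relIdeal (m : ℕ) : Ideal (MvPolynomial (Fin m) (ZMod 2)) :=
  Ideal.span {p | ∃ i : Fin m, p = X i ^ 2 - 1}

/-- The ambient algebra A = F₂[X₁,…,Xₘ]/(X₁²-1,…,Xₘ²-1). -/
abbrev Amb (m : ℕ) := MvPolynomial (Fin m) (ZMod 2) ⧸ relIdeal m

/-- The ideal M of A generated by the images of the Xᵢ - 1. -/
noncomputable def Mideal (m : ℕ) : Ideal (Amb m) :=
  Ideal.span {a | ∃ i : Fin m, a = Ideal.Quotient.mk (relIdeal m) (X i - 1)}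

/-- G = {∏_{i∈I}(Xᵢ-1) : |I| = l}. -/
def Gset (m l : ℕ) : Set (MvPolynomial (Fin m) (ZMod 2)) :=
  {p | ∃ I : Finset (Fin m), I.card = l ∧ p = gI m I}

/-- `IsRemainder m l f r` : r is the remainder of f on division by the Groebner basis
G = {∏_{i∈I}(Xᵢ-1) : |I| = l} (grlex order): f - r ∈ ⟨G⟩ and no term of r is divisible
by any of the leading terms X_I (|I| = l) of the members of G. -/
def IsRemainder (m l : ℕ) (f r : MvPolynomial (Fin m) (ZMod 2)) : Prop :=
  f - r ∈ Ideal.span (Gset m l) ∧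
  ∀ α ∈ r.support, ∀ I : Finset (Fin m), I.card = l → ¬ I ⊆ α.support

----------------- auxiliary -----------------

noncomputable def sg (m : ℕ) : MvPolynomial (Fin m) (ZMod 2) →ₐ[ZMod 2] MvPolynomial (Fin m) (ZMod 2) :=
  aeval (fun i => X i + 1)

variable {m : ℕ}

lemma sg_X (i : Fin m) : sg m (X i) = X i + 1 := aeval_X _ i

lemma sg_sg (p : MvPolynomial (Fin m) (ZMod 2)) : sg m (sg m p) = p := by
  have h : (sg m).comp (sg m) = AlgHom.id (ZMod 2) _ := by
    apply MvPolynomial.algHom_ext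
    intro i
    simp [sg, aeval_X, add_assoc, CharTwo.add_self_eq_zero]
  calc sg m (sg m p) = ((sg m).comp (sg m)) p := rfl
    _ = p := by rw [h]; rfl

lemma mem_span_sg {S : Set (MvPolynomial (Fin m) (ZMod 2))} {p : MvPolynomial (Fin m) (ZMod 2)} :
    p ∈ Ideal.span S ↔ sg m p ∈ Ideal.span (sg m '' S) := by
  constructor
  · intro h
    rw [← Ideal.map_span (sg m)]
    exact Ideal.mem_map_of_mem _ h
  · intro h
    have h2 : sg m (sg m p) ∈ Ideal.span ((sg m) '' ((sg m) '' S)) := by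
      rw [← Ideal.map_span]; exact Ideal.mem_map_of_mem _ h
    rwa [sg_sg, Set.image_image, show (fun x => sg m (sg m x)) = id from funext sg_sg,
      Set.image_id] at h2

lemma sg_gI (I : Finset (Fin m)) : sg m (gI m I) = XI m I := by
  rw [gI, map_prod, XI]
  refine Finset.prod_congr rfl fun i _ => ?_
  rw [map_sub, map_one, sg_X, add_sub_cancel_right]

lemma sg_rel (i : Fin m) : sg m (X i ^ 2 - 1) = X i ^ 2 := by
  rw [map_sub, map_one, map_pow, sg_X, CharTwo.add_sq, one_pow, add_sub_cancel_right]

noncomputable def eF (I : Finset (Fin m)) : Fin m →₀ ℕ := ∑ i ∈ I, Finsupp.single i 1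

lemma eF_apply (I : Finset (Fin m)) (j : Fin m) : eF I j = if j ∈ I then 1 else 0 := by
  classical
  rw [eF, Finsupp.finset_sum_apply]
  simp [Finsupp.single_apply]

lemma XI_eq (I : Finset (Fin m)) : XI m I = monomial (eF I) 1 := by
  classical
  induction I using Finset.induction with
  | empty => simp [XI, eF]
  | @insert i I hi ih =>
    have he : eF (insert i I) = Finsupp.single i 1 + eF I := by
      rw [eF, Finset.sum_insert hi]; rfl
    rw [XI, Finset.prod_insert hi, ← XI, ih, he,
      show (X i : MvPolynomial (Fin m) (ZMod 2)) = monomial (Finsupp.single i 1) 1 from rfl,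
      monomial_mul, one_mul]

lemma eF_le_iff (I : Finset (Fin m)) (α : Fin m →₀ ℕ) : eF I ≤ α ↔ I ⊆ α.support := by
  rw [Finsupp.le_def]
  constructor
  · intro h i hi
    have hh := h i
    rw [eF_apply, if_pos hi] at hh
    exact Finsupp.mem_support_iff.2 (by omega)
  · intro h i
    rw [eF_apply]
    split
    · next hi =>
      have := Finsupp.mem_support_iff.1 (h hi)
      omega
    · exact Nat.zero_le _

lemma support_gI (I : Finset (Fin m)) :
    ∀ α ∈ (gI m I).support, (∀ i, α i ≤ 1) ∧ (∀ i, α i ≠ 0 → i ∈ I) := by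
  classical
  induction I using Finset.induction with
  | empty =>
    intro α hα
    rw [gI, Finset.prod_empty, show (1 : MvPolynomial (Fin m) (ZMod 2)) = monomial 0 1 from rfl,
      support_monomial] at hα
    simp only [one_ne_zero, if_false, Finset.mem_singleton] at hα
    subst hα
    simp
  | @insert i I hi ih =>
    intro α hα
    rw [gI, Finset.prod_insert hi, ← gI, sub_mul, one_mul] at hα
    have h := MvPolynomial.support_sub _ _ _ hα
    rcases Finset.mem_union.1 h with h1 | h1
    · rw [MvPolynomial.support_X_mul, Finset.mem_map] at h1
      obtain ⟨β, hβ, rfl⟩ := h1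
      obtain ⟨hb1, hb2⟩ := ih β hβ
      have hbi : β i = 0 := by
        by_contra hc
        exact hi (hb2 i hc)
      constructor
      · intro j
        rcases eq_or_ne j i with rfl | hji
        · simp [addLeftEmbedding, Finsupp.single_apply, hbi]
        · simp only [addLeftEmbedding_apply, Finsupp.add_apply, Finsupp.single_apply,
            Ne.symm hji, if_false, zero_add]
          exact hb1 j
      · intro j hj
        rcases eq_or_ne j i with rfl | hji
        · exact Finset.mem_insert_self _ _
        · simp only [addLeftEmbedding_apply, Finsupp.add_apply, Finsupp.single_apply,
            Ne.symm hji, if_false, zero_add] at hj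
          exact Finset.mem_insert_of_mem (hb2 j hj)
    · obtain ⟨hb1, hb2⟩ := ih α h1
      exact ⟨hb1, fun j hj => Finset.mem_insert_of_mem (hb2 j hj)⟩

lemma gI_eq_add (I : Finset (Fin m)) : gI m I = ∏ i ∈ I, (X i + 1) := by
  rw [gI]
  exact Finset.prod_congr rfl fun i _ => CharTwo.sub_eq_add _ _

lemma sg_squarefree {f : MvPolynomial (Fin m) (ZMod 2)}
    (hf : ∀ α ∈ f.support, ∀ i, α i ≤ 1) :
    ∀ α ∈ (sg m f).support, ∀ i, α i ≤ 1 := by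
  classical
  intro α hα i
  have hrw : sg m f = ∑ v ∈ f.support, sg m (monomial v (coeff v f)) := by
    conv_lhs => rw [MvPolynomial.as_sum f]
    rw [map_sum]
  rw [hrw] at hα
  obtain ⟨v, hv, hαv⟩ := Finset.mem_biUnion.1 (MvPolynomial.support_sum hα)
  have hmono : sg m (monomial v (coeff v f)) = C (coeff v f) * gI m v.support := by
    rw [sg, aeval_monomial, MvPolynomial.algebraMap_eq, gI_eq_add, Finsupp.prod]
    congr 1
    refine Finset.prod_congr rfl fun j hj => ?_
    have h1 : v j = 1 := by
      have := hf v hv j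
      have := Finsupp.mem_support_iff.1 hj
      omega
    rw [h1, pow_one]
  rw [hmono, MvPolynomial.C_mul'] at hαv
  have := (support_gI v.support α (Finsupp.support_smul hαv)).1 i
  exact this

lemma image_Gset (l : ℕ) : sg m '' Gset m l =
    (fun s => monomial s (1 : ZMod 2)) '' {s | ∃ I : Finset (Fin m), I.card = l ∧ s = eF I} := by
  ext p
  simp only [Set.mem_image, Gset, Set.mem_setOf_eq]
  constructor
  · rintro ⟨_, ⟨I, hI, rfl⟩, rfl⟩
    exact ⟨eF I, ⟨I, hI, rfl⟩, by rw [sg_gI, XI_eq]⟩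
  · rintro ⟨_, ⟨I, hI, rfl⟩, rfl⟩
    exact ⟨gI m I, ⟨I, hI, rfl⟩, by rw [sg_gI, XI_eq]⟩

lemma image_GR (l : ℕ) :
    sg m '' (Gset m l ∪ {p | ∃ i : Fin m, p = X i ^ 2 - 1}) =
      (fun s => monomial s (1 : ZMod 2)) ''
        ({s | ∃ I : Finset (Fin m), I.card = l ∧ s = eF I} ∪
          {s | ∃ i : Fin m, s = Finsupp.single i 2}) := by
  rw [Set.image_union, Set.image_union, image_Gset]
  congr 1
  ext p
  simp only [Set.mem_image, Set.mem_setOf_eq]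
  constructor
  · rintro ⟨_, ⟨i, rfl⟩, rfl⟩
    exact ⟨Finsupp.single i 2, ⟨i, rfl⟩, by rw [sg_rel, X_pow_eq_monomial]⟩
  · rintro ⟨_, ⟨i, rfl⟩, rfl⟩
    exact ⟨X i ^ 2 - 1, ⟨i, rfl⟩, by rw [sg_rel, X_pow_eq_monomial]⟩

lemma sq_sub_one (i : Fin m) : (X i - 1 : MvPolynomial (Fin m) (ZMod 2)) ^ 2 = X i ^ 2 - 1 := by
  rw [CharTwo.sub_eq_add, CharTwo.add_sq, one_pow, ← CharTwo.sub_eq_add]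

lemma pow_le_spanGR (l : ℕ) (hl : 1 ≤ l) :
    Ideal.span {p : MvPolynomial (Fin m) (ZMod 2) | ∃ i : Fin m, p = X i - 1} ^ l ≤
      Ideal.span (Gset m l ∪ {p | ∃ i : Fin m, p = X i ^ 2 - 1}) := by
  classical
  induction l, hl using Nat.le_induction with
  | base =>
    rw [pow_one, Ideal.span_le]
    rintro p ⟨i, rfl⟩
    exact Ideal.subset_span (Or.inl ⟨{i}, Finset.card_singleton i, by simp [gI]⟩)
  | succ l hl ih =>
    rw [pow_succ]
    calc Ideal.span {p : MvPolynomial (Fin m) (ZMod 2) | ∃ i : Fin m, p = X i - 1} ^ l *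
          Ideal.span {p : MvPolynomial (Fin m) (ZMod 2) | ∃ i : Fin m, p = X i - 1}
        ≤ Ideal.span (Gset m l ∪ {p | ∃ i : Fin m, p = X i ^ 2 - 1}) *
          Ideal.span {p : MvPolynomial (Fin m) (ZMod 2) | ∃ i : Fin m, p = X i - 1} :=
          Ideal.mul_mono ih le_rfl
      _ ≤ Ideal.span (Gset m (l + 1) ∪ {p | ∃ i : Fin m, p = X i ^ 2 - 1}) := by
          rw [Ideal.span_mul_span, Ideal.span_le]
          intro p hp
          rw [Set.mem_mul] at hp
          obtain ⟨s, hs, t, ⟨i, rfl⟩, rfl⟩ := hp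
          rcases hs with ⟨I, hI, rfl⟩ | ⟨j, rfl⟩
          · by_cases hiI : i ∈ I
            · have hgI : gI m I = (X i - 1) * gI m (I.erase i) := by
                rw [gI, ← Finset.mul_prod_erase I _ hiI, gI]
              have : gI m I * (X i - 1) = (X i ^ 2 - 1) * gI m (I.erase i) := by
                rw [hgI]; rw [← sq_sub_one]; ring
              rw [this]
              exact Ideal.mul_mem_right _ _ (Ideal.subset_span (Or.inr ⟨i, rfl⟩))
            · have : gI m I * (X i - 1) = gI m (insert i I) := by
                rw [gI, gI, Finset.prod_insert hiI]; ring
              rw [this]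
              exact Ideal.subset_span (Or.inl ⟨insert i I, by
                rw [Finset.card_insert_of_notMem hiI, hI], rfl⟩)
          · exact Ideal.mul_mem_right _ _ (Ideal.subset_span (Or.inr ⟨j, rfl⟩))

lemma Mideal_eq : Mideal m =
    Ideal.map (Ideal.Quotient.mk (relIdeal m))
      (Ideal.span {p : MvPolynomial (Fin m) (ZMod 2) | ∃ i : Fin m, p = X i - 1}) := by
  rw [Ideal.map_span, Mideal]
  congr 1
  ext a
  constructor
  · rintro ⟨i, rfl⟩
    exact ⟨X i - 1, ⟨i, rfl⟩, rfl⟩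
  · rintro ⟨p, ⟨i, rfl⟩, rfl⟩
    exact ⟨i, rfl⟩

lemma gI_mem_pow (I : Finset (Fin m)) :
    Ideal.Quotient.mk (relIdeal m) (gI m I) ∈ Mideal m ^ I.card := by
  classical
  induction I using Finset.induction with
  | empty => simp [gI]
  | @insert i I hi ih =>
    rw [Finset.card_insert_of_notMem hi, gI, Finset.prod_insert hi, ← gI, map_mul,
      show Mideal m ^ (I.card + 1) = Mideal m * Mideal m ^ I.card from Ideal.IsTwoSided.pow_succ _]
    exact Ideal.mul_mem_mul (Ideal.subset_span ⟨i, rfl⟩) ih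


/-- for f(x) ∈ A with squarefree representative f(X),
f(x) ∈ Mˡ iff the remainder of f(X) on division by G is zero. -/
theorem stmt11 (m l : ℕ) (hl1 : 1 ≤ l) (hlm : l ≤ m)
    (f : MvPolynomial (Fin m) (ZMod 2))
    (hf : ∀ α ∈ f.support, ∀ i : Fin m, α i ≤ 1) :
    Ideal.Quotient.mk (relIdeal m) f ∈ Mideal m ^ l ↔ IsRemainder m l f 0 := by
  classical
  have hrem : IsRemainder m l f 0 ↔ f ∈ Ideal.span (Gset m l) := by
    unfold IsRemainder
    simp
  rw [hrem]
  constructor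
  · intro h
    rw [Mideal_eq, ← Ideal.map_pow,
      Ideal.mem_map_iff_of_surjective _ Ideal.Quotient.mk_surjective] at h
    obtain ⟨g, hg, hgf⟩ := h
    have hfg : g - f ∈ relIdeal m := Ideal.Quotient.eq.mp hgf
    have hmem : f ∈ Ideal.span (Gset m l ∪ {p | ∃ i : Fin m, p = X i ^ 2 - 1}) := by
      have h1 : g ∈ Ideal.span (Gset m l ∪ {p | ∃ i : Fin m, p = X i ^ 2 - 1}) :=
        pow_le_spanGR l hl1 hg
      have h2 : g - f ∈ Ideal.span (Gset m l ∪ {p | ∃ i : Fin m, p = X i ^ 2 - 1}) := by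
        rw [Ideal.span_union]
        exact Ideal.mem_sup_right hfg
      have := sub_mem h1 h2
      simpa using this
    rw [mem_span_sg, image_GR, MvPolynomial.mem_ideal_span_monomial_image] at hmem
    rw [mem_span_sg, image_Gset, MvPolynomial.mem_ideal_span_monomial_image]
    intro α hα
    obtain ⟨s, hs, hsle⟩ := hmem α hα
    rcases hs with hs | ⟨i, rfl⟩
    · exact ⟨s, hs, hsle⟩
    · exfalso
      have h1 := sg_squarefree hf α hα i
      have h2 := (Finsupp.le_def.mp hsle) i
      simp [Finsupp.single_apply] at h2
      omega
  · intro h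
    have hle : Ideal.span (Gset m l) ≤
        Ideal.comap (Ideal.Quotient.mk (relIdeal m)) (Mideal m ^ l) := by
      rw [Ideal.span_le]
      rintro p ⟨I, hI, rfl⟩
      have := gI_mem_pow I
      rw [hI] at this
      exact this
    exact hle h
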